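/- The Eisenstein series E_{p-1} of weight p-1 and level 1 has q-expansion congruent to 1 modulo p, for any prime p ≥ 5. In particular, E_4(q) ≡ 1 (mod 5). -/

import Mathlib

open Finset

variable {p : ℕ} [hp : Fact p.Prime]

-- norm of (j+1) as a rational
lemma norm_nat_succ (j : ℕ) :
    padicNorm p ((j : ℚ) + 1) = (p : ℚ) ^ (-(padicValNat p (j + 1) : ℤ)) := by
  have h : ((j : ℚ) + 1) = ((j + 1 : ℕ) : ℚ) := by push_cast; ring
  rw [h, padicNorm.eq_zpow_of_nonzero (by exact_mod_cast (Nat.succ_ne_zero j)),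
    padicValRat.of_nat]

lemma val_succ_le (hp5 : 5 ≤ p) (j : ℕ) : padicValNat p (j + 1) ≤ j := by
  set v := padicValNat p (j + 1) with hv
  have hdvd : p ^ v ∣ j + 1 := pow_padicValNat_dvd
  have hle : p ^ v ≤ j + 1 := Nat.le_of_dvd (Nat.succ_pos j) hdvd
  have := Nat.lt_pow_self (show 1 < p by omega) (n := v)
  omega

lemma val_succ_lt (hp5 : 5 ≤ p) {j : ℕ} (hj : 1 ≤ j) : padicValNat p (j + 1) + 1 ≤ j := by
  set v := padicValNat p (j + 1) with hv
  have hdvd : p ^ v ∣ j + 1 := pow_padicValNat_dvd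
  have hle : p ^ v ≤ j + 1 := Nat.le_of_dvd (Nat.succ_pos j) hdvd
  rcases Nat.eq_zero_or_pos v with h0 | h1
  · omega
  · have h5 : 5 ^ v ≤ p ^ v := Nat.pow_le_pow_left hp5 v
    have : v - 1 < 5 ^ (v - 1) := Nat.lt_pow_self (show 1 < 5 by omega)
    have : 5 * 5 ^ (v - 1) = 5 ^ v := by
      rw [← pow_succ']
      congr 1
      omega
    omega

lemma faulhaber_ident (m : ℕ) :
    (p : ℚ) * bernoulli m =
      (∑ k ∈ range p, (k : ℚ) ^ m) -
        ∑ i ∈ range m, bernoulli i * ((m + 1).choose i) * (p : ℚ) ^ (m + 1 - i) / (m + 1) := by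
  have h := sum_range_pow p m
  rw [Finset.sum_range_succ] at h
  have h1 : bernoulli m * ((m + 1).choose m : ℚ) * (p : ℚ) ^ (m + 1 - m) / (m + 1)
      = (p : ℚ) * bernoulli m := by
    have h2 : (m + 1).choose m = m + 1 := Nat.choose_succ_self_right m
    have h3 : m + 1 - m = 1 := by omega
    rw [h2, h3]
    have hm : ((m : ℚ) + 1) ≠ 0 := by positivity
    push_cast
    field_simp
  rw [h1] at h
  linarith

lemma term_norm_le (hp5 : 5 ≤ p) {i m : ℕ} (him : i < m)
    (hB : padicNorm p ((p : ℚ) * bernoulli i) ≤ 1) :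
    padicNorm p (bernoulli i * ((m + 1).choose i) * (p : ℚ) ^ (m + 1 - i) / (m + 1))
      ≤ (p : ℚ)⁻¹ := by
  set j := m - i with hj
  have hj1 : 1 ≤ j := by omega
  have hmi : m + 1 - i = j + 1 := by omega
  have hchoose : (m.choose i : ℚ) * ((m : ℚ) + 1) = ((m + 1).choose i : ℚ) * ((j : ℚ) + 1) := by
    have hn := Nat.choose_mul_succ_eq m i
    rw [hmi] at hn
    exact_mod_cast hn
  have hm1 : ((m : ℚ) + 1) ≠ 0 := by positivity
  have hj1' : ((j : ℚ) + 1) ≠ 0 := by positivity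
  have hexpr : bernoulli i * ((m + 1).choose i) * (p : ℚ) ^ (m + 1 - i) / (m + 1)
      = ((p : ℚ) * bernoulli i) * (m.choose i : ℚ) * ((p : ℚ) ^ j / ((j : ℚ) + 1)) := by
    rw [hmi, pow_succ]
    field_simp
    linear_combination (-(bernoulli i)) * hchoose
  rw [hexpr, padicNorm.mul, padicNorm.mul]
  have hCle : padicNorm p (m.choose i : ℚ) ≤ 1 := padicNorm.of_nat _
  have hpj : padicNorm p ((p : ℚ) ^ j / ((j : ℚ) + 1)) ≤ (p : ℚ)⁻¹ := by
    rw [padicNorm.div, norm_nat_succ]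
    have hppow : padicNorm p ((p : ℚ) ^ j) = (p : ℚ) ^ (-(j : ℤ)) := by
      have hcast : ((p : ℚ)) ^ j = (((p ^ j : ℕ)) : ℚ) := by push_cast; ring
      have hne : ((p ^ j : ℕ) : ℚ) ≠ 0 := by
        exact_mod_cast pow_ne_zero j hp.out.pos.ne'
      rw [hcast, padicNorm.eq_zpow_of_nonzero hne, padicValRat.of_nat, padicValNat.prime_pow]
    rw [hppow, ← zpow_sub₀ (by exact_mod_cast hp.out.pos.ne' : (p:ℚ) ≠ 0)]
    have hv := val_succ_lt hp5 hj1
    have : (-(j:ℤ)) - (-(padicValNat p (j+1) : ℤ)) ≤ -1 := by omega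
    calc (p:ℚ) ^ ((-(j:ℤ)) - (-(padicValNat p (j+1) : ℤ)))
        ≤ (p:ℚ) ^ (-1 : ℤ) := by
          apply zpow_le_zpow_right₀ (by exact_mod_cast hp.out.one_le) this
      _ = (p:ℚ)⁻¹ := by norm_num
  calc padicNorm p ((p:ℚ) * bernoulli i) * padicNorm p (m.choose i : ℚ) *
        padicNorm p ((p : ℚ) ^ j / ((j : ℚ) + 1))
      ≤ 1 * 1 * (p:ℚ)⁻¹ := by
        apply mul_le_mul (mul_le_mul hB hCle (padicNorm.nonneg _) (by linarith)) hpj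
          (padicNorm.nonneg _) (by norm_num)
    _ = (p:ℚ)⁻¹ := by ring

lemma p_mul_bernoulli_norm_le (hp5 : 5 ≤ p) : ∀ m : ℕ, padicNorm p ((p : ℚ) * bernoulli m) ≤ 1 := by
  intro m
  induction m using Nat.strong_induction_on with
  | _ m ih =>
    rw [faulhaber_ident]
    have hS : padicNorm p (∑ k ∈ range p, (k : ℚ) ^ m) ≤ 1 := by
      have : (∑ k ∈ range p, (k : ℚ) ^ m) = ((∑ k ∈ range p, k ^ m : ℕ) : ℚ) := by
        push_cast; ring
      rw [this]
      exact padicNorm.of_nat _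
    have hT : padicNorm p (∑ i ∈ range m,
        bernoulli i * ((m + 1).choose i) * (p : ℚ) ^ (m + 1 - i) / (m + 1)) ≤ 1 := by
      apply padicNorm.sum_le'
      · intro i hi
        have := term_norm_le hp5 (Finset.mem_range.mp hi) (ih i (Finset.mem_range.mp hi))
        have hinv : (p : ℚ)⁻¹ ≤ 1 := by
          rw [inv_le_one_iff₀]
          right
          exact_mod_cast hp.out.one_le
        linarith
      · norm_num
    calc padicNorm p (_ - _) ≤ max _ _ := padicNorm.sub
      _ ≤ 1 := max_le hS hT

lemma fermat_sum_not_dvd (hp5 : 5 ≤ p) : ¬ p ∣ ∑ k ∈ range p, k ^ (p - 1) := by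
  intro hdvd
  have hcast : ((∑ k ∈ range p, k ^ (p - 1) : ℕ) : ZMod p) = 0 :=
    (ZMod.natCast_eq_zero_iff _ _).mpr hdvd
  rw [Nat.cast_sum] at hcast
  have hrange : range p = range ((p - 1) + 1) := by congr 1; omega
  rw [hrange, Finset.sum_range_succ'] at hcast
  have h0 : ((0 ^ (p - 1) : ℕ) : ZMod p) = 0 := by
    rw [Nat.zero_pow (by omega)]; simp
  have heach : ∀ i, i < p - 1 → (((i + 1) ^ (p - 1) : ℕ) : ZMod p) = 1 := by
    intro i hi
    push_cast
    apply ZMod.pow_card_sub_one_eq_one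
    rw [show ((i : ZMod p) + 1) = ((i + 1 : ℕ) : ZMod p) by push_cast; ring]
    rw [Ne, ZMod.natCast_eq_zero_iff]
    intro h
    have := Nat.le_of_dvd (Nat.succ_pos i) h
    omega
  rw [Finset.sum_congr rfl (fun i hi => heach i (Finset.mem_range.mp hi)), h0,
    Finset.sum_const, Finset.card_range, add_zero, nsmul_eq_mul, mul_one] at hcast
  rw [show ((p - 1 : ℕ) : ZMod p) = ((p - 1 : ℕ) : ZMod p) from rfl] at hcast
  have : p ∣ p - 1 := (ZMod.natCast_eq_zero_iff _ _).mp hcast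
  have := Nat.le_of_dvd (by omega) this
  omega

lemma bernoulli_pred_norm (hp5 : 5 ≤ p) : padicNorm p (bernoulli (p - 1)) = p := by
  have hident := faulhaber_ident (p := p) (p - 1)
  set m := p - 1 with hm
  set S := (∑ k ∈ range p, (k : ℚ) ^ m) with hS
  set T := ∑ i ∈ range m, bernoulli i * ((m + 1).choose i) * (p : ℚ) ^ (m + 1 - i) / (m + 1)
    with hT
  have hScast : S = ((∑ k ∈ range p, k ^ m : ℕ) : ℚ) := by rw [hS]; push_cast; ring
  have hSnorm : padicNorm p S = 1 := by
    rw [hScast]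
    exact (padicNorm.nat_eq_one_iff _).mpr (fermat_sum_not_dvd hp5)
  have hTnorm : padicNorm p T ≤ (p : ℚ)⁻¹ := by
    apply padicNorm.sum_le'
    · intro i hi
      exact term_norm_le hp5 (Finset.mem_range.mp hi) (p_mul_bernoulli_norm_le hp5 i)
    · positivity
  have hp1 : (1 : ℚ) < p := by exact_mod_cast by omega
  have hTlt : padicNorm p T < 1 := lt_of_le_of_lt hTnorm (by rw [inv_lt_one_iff₀]; right; exact hp1)
  have hpB : padicNorm p ((p : ℚ) * bernoulli m) = 1 := by
    apply le_antisymm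
    · rw [hident]
      calc padicNorm p (S - T) ≤ max (padicNorm p S) (padicNorm p T) := padicNorm.sub
        _ ≤ 1 := max_le (le_of_eq hSnorm) (le_of_lt hTlt)
    · have hSeq : S = ((p : ℚ) * bernoulli m) + T := by rw [hident]; ring
      have := padicNorm.nonarchimedean (p := p) (q := (p : ℚ) * bernoulli m) (r := T)
      rw [← hSeq, hSnorm] at this
      rcases max_cases (padicNorm p ((p : ℚ) * bernoulli m)) (padicNorm p T) with ⟨h1, _⟩ | ⟨h1, _⟩
      · rw [h1] at this; exact this
      · rw [h1] at this; linarith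
  have hpnorm : padicNorm p ((p : ℚ)) = (p : ℚ)⁻¹ := padicNorm.padicNorm_p_of_prime
  rw [padicNorm.mul, hpnorm] at hpB
  have hpne : (p : ℚ) ≠ 0 := by positivity
  field_simp at hpB
  linarith

theorem eisenstein_aux :
    ∀ p : ℕ, p.Prime → 5 ≤ p → ∀ n : ℕ, 1 ≤ n →
      1 ≤ padicValRat p
        ((2 * ((p : ℚ) - 1) / bernoulli' (p - 1)) *
          (∑ d ∈ Nat.divisors n, (d : ℚ) ^ (p - 2))) := by
  intro p hp hp5 n hn
  haveI : Fact p.Prime := ⟨hp⟩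
  have hB' : bernoulli' (p - 1) = bernoulli (p - 1) :=
    (bernoulli_eq_bernoulli'_of_ne_one (by omega)).symm
  have hBnorm : padicNorm p (bernoulli (p - 1)) = p := bernoulli_pred_norm hp5
  have hBne : bernoulli (p - 1) ≠ 0 := by
    intro h
    rw [h, padicNorm.zero] at hBnorm
    have : (0 : ℚ) < p := by positivity
    linarith [hBnorm ▸ this]
  have hp1 : (1 : ℚ) < p := by exact_mod_cast by omega
  have hnum : 2 * ((p : ℚ) - 1) = ((2 * (p - 1) : ℕ) : ℚ) := by
    push_cast [Nat.cast_sub (by omega : 1 ≤ p)]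
    ring
  have hnumne : 2 * ((p : ℚ) - 1) ≠ 0 := by
    intro h; nlinarith
  have hsnat : (∑ d ∈ Nat.divisors n, (d : ℚ) ^ (p - 2))
      = ((∑ d ∈ Nat.divisors n, d ^ (p - 2) : ℕ) : ℚ) := by push_cast; ring
  have hspos : 0 < ∑ d ∈ Nat.divisors n, d ^ (p - 2) := by
    apply Finset.sum_pos
    · intro d hd
      exact Nat.pow_pos (Nat.pos_of_mem_divisors hd)
    · exact ⟨n, Nat.mem_divisors_self n (by omega)⟩
  have hsne : (∑ d ∈ Nat.divisors n, (d : ℚ) ^ (p - 2)) ≠ 0 := by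
    rw [hsnat]
    exact_mod_cast hspos.ne'
  have hcne : 2 * ((p : ℚ) - 1) / bernoulli' (p - 1) ≠ 0 := by
    rw [hB']
    exact div_ne_zero hnumne hBne
  have hxne : (2 * ((p : ℚ) - 1) / bernoulli' (p - 1)) *
      (∑ d ∈ Nat.divisors n, (d : ℚ) ^ (p - 2)) ≠ 0 := mul_ne_zero hcne hsne
  have hnormle : padicNorm p ((2 * ((p : ℚ) - 1) / bernoulli' (p - 1)) *
      (∑ d ∈ Nat.divisors n, (d : ℚ) ^ (p - 2))) ≤ (p : ℚ)⁻¹ := by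
    rw [padicNorm.mul, padicNorm.div, hB', hBnorm, hnum, hsnat]
    have h1 : padicNorm p ((2 * (p - 1) : ℕ) : ℚ) ≤ 1 := padicNorm.of_nat _
    have h2 : padicNorm p ((∑ d ∈ Nat.divisors n, d ^ (p - 2) : ℕ) : ℚ) ≤ 1 :=
      padicNorm.of_nat _
    have hppos : (0 : ℚ) < p := by positivity
    calc padicNorm p ((2 * (p - 1) : ℕ) : ℚ) / (p : ℚ) *
          padicNorm p ((∑ d ∈ Nat.divisors n, d ^ (p - 2) : ℕ) : ℚ)
        ≤ 1 / (p : ℚ) * 1 := by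
          gcongr
          exact padicNorm.nonneg _
      _ = (p : ℚ)⁻¹ := by rw [one_div, mul_one]
  rw [padicNorm.eq_zpow_of_nonzero hxne, show (p : ℚ)⁻¹ = (p : ℚ) ^ (-1 : ℤ) by
    rw [zpow_neg_one]] at hnormle
  have hfin := (zpow_le_zpow_iff_right₀ hp1).mp hnormle
  linarith



/-!
STATEMENT 0: For every prime `p ≥ 5`, the normalized Eisenstein series `E_{p-1}` of
weight `p-1` and level 1, with q-expansion
`E_{p-1}(q) = 1 - (2(p-1)/B_{p-1}) ∑_{n ≥ 1} σ_{p-2}(n) qⁿ`,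
is congruent to `1` modulo `p`: every coefficient of `qⁿ` for `n ≥ 1` has p-adic
valuation at least `1`.  (In particular `E_4(q) ≡ 1 (mod 5)`.)
-/
theorem eisenstein_qexpansion_congruent_one_mod_p :
    ∀ p : ℕ, p.Prime → 5 ≤ p → ∀ n : ℕ, 1 ≤ n →
      1 ≤ padicValRat p
        ((2 * ((p : ℚ) - 1) / bernoulli' (p - 1)) *
          (∑ d ∈ Nat.divisors n, (d : ℚ) ^ (p - 2))) := by
  exact eisenstein_aux
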